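/- Let H be a real Hilbert space, let ω > 0, and let A : H → H be ω-strongly monotone, i.e. ⟨A x − A y, x − y⟩ ≥ ω ‖x − y‖² for all x, y ∈ H. Let g : [0, ∞) → H be continuously differentiable and let u : [0, ∞) → H be differentiable with u'(t) + A(u(t)) = g(t) for all t ≥ 0. Then for all 0 ≤ s ≤ t, ‖u'(t)‖² ≤ e^{−ω (t − s)} ‖u'(s)‖² + ω^{−1} ∫_s^t e^{−ω (t − τ)} ‖g'(τ)‖² dτ. -/

import Mathlib

open MeasureTheory Metric Set Real Filter Topology

local notation "⟪" x ", " y "⟫" => @inner ℝ _ _ x y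

/-- Key estimate for the translated difference `u (· + h) - u`, for a fixed `h > 0`. -/
lemma decay_key_aux
    {H : Type*} [NormedAddCommGroup H] [InnerProductSpace ℝ H]
    (ω : ℝ) (hω : 0 < ω) (A : H → H)
    (hA : ∀ x y : H, ω * ‖x - y‖ ^ 2 ≤ ⟪A x - A y, x - y⟫)
    (g : ℝ → H) (hgc : ContinuousOn g (Ici 0))
    (u u' : ℝ → H)
    (hu : ∀ t : ℝ, 0 ≤ t → HasDerivAt u (u' t) t ∧ u' t + A (u t) = g t)
    (h : ℝ) (hh : 0 < h) (s t : ℝ) (hs : 0 ≤ s) (hst : s ≤ t) :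
    ‖u (t + h) - u t‖ ^ 2 ≤ Real.exp (-ω * (t - s)) * ‖u (s + h) - u s‖ ^ 2
      + ω⁻¹ * ∫ τ in s..t, Real.exp (-ω * (t - τ)) * ‖g (τ + h) - g τ‖ ^ 2 := by
  set v : ℝ → H := fun τ => u (τ + h) - u τ with hv_def
  set B : ℝ → ℝ := fun τ => Real.exp (ω * τ) * ‖g (τ + h) - g τ‖ ^ 2 with hB_def
  set F : ℝ → ℝ := fun τ => Real.exp (ω * τ) * ⟪v τ, v τ⟫ with hF_def
  have hucont : ContinuousOn u (Ici 0) := fun x hx =>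
    ((hu x hx).1.continuousAt).continuousWithinAt
  have hmaps : MapsTo (fun τ : ℝ => τ + h) (Ici 0) (Ici 0) := fun x hx => by
    simp only [mem_Ici] at *; linarith
  have hvc : ContinuousOn v (Ici 0) :=
    (hucont.comp (continuous_add_right h).continuousOn hmaps).sub hucont
  have hgc2 : ContinuousOn (fun τ => g (τ + h)) (Ici 0) :=
    hgc.comp (continuous_add_right h).continuousOn hmaps
  have hBc : ContinuousOn B (Ici 0) :=
    (Real.continuous_exp.comp (continuous_const.mul continuous_id)).continuousOn.mul
      (((hgc2.sub hgc).norm).pow 2)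
  have hFc : ContinuousOn F (Ici 0) :=
    (Real.continuous_exp.comp (continuous_const.mul continuous_id)).continuousOn.mul
      (hvc.inner hvc)
  have hIcc : Icc s t ⊆ Ici 0 := fun x hx => le_trans hs hx.1
  have hBint : ∀ τ ∈ Icc s t, IntervalIntegrable B volume s τ := fun τ hτ => by
    apply ContinuousOn.intervalIntegrable
    apply hBc.mono
    rw [uIcc_of_le hτ.1]
    exact fun x hx => hIcc ⟨hx.1, le_trans hx.2 hτ.2⟩
  set ψ : ℝ → ℝ := fun τ => ω⁻¹ * (∫ x in s..τ, B x) - F τ with hψ_def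
  have hmono : MonotoneOn ψ (Icc s t) := by
    apply monotoneOn_of_hasDerivWithinAt_nonneg (f := ψ) (convex_Icc s t)
      (f' := fun τ => ω⁻¹ * B τ - (ω * Real.exp (ω * τ) * ⟪v τ, v τ⟫ +
        Real.exp (ω * τ) * (⟪v τ, u' (τ + h) - u' τ⟫ + ⟪u' (τ + h) - u' τ, v τ⟫)))
    · -- continuity of ψ on Icc s t
      have hprim : ContinuousOn (fun τ => ∫ x in s..τ, B x) (Icc s t) := by
        have hint : IntegrableOn B (uIcc s t) volume := by
          apply (hBc.mono ?_).integrableOn_compact isCompact_uIcc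
          rw [uIcc_of_le hst]; exact hIcc
        have := intervalIntegral.continuousOn_primitive_interval hint
        rwa [uIcc_of_le hst] at this
      exact (continuousOn_const.mul hprim).sub (hFc.mono hIcc)
    · -- the derivative
      rw [interior_Icc]
      intro τ hτ
      have hτ0 : (0:ℝ) < τ := lt_of_le_of_lt hs hτ.1
      have hτh0 : (0:ℝ) ≤ τ + h := by linarith
      have hvd : HasDerivAt v (u' (τ + h) - u' τ) τ :=
        (((hu (τ + h) hτh0).1).comp_add_const τ h).sub (hu τ hτ0.le).1
      have hFd : HasDerivAt F (ω * Real.exp (ω * τ) * ⟪v τ, v τ⟫ +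
          Real.exp (ω * τ) * (⟪v τ, u' (τ + h) - u' τ⟫ + ⟪u' (τ + h) - u' τ, v τ⟫)) τ := by
        have he : HasDerivAt (fun σ => Real.exp (ω * σ)) (Real.exp (ω * τ) * ω) τ := by
          simpa using ((hasDerivAt_id τ).const_mul ω).exp
        have hN : HasDerivAt (fun σ => ⟪v σ, v σ⟫)
            (⟪v τ, u' (τ + h) - u' τ⟫ + ⟪u' (τ + h) - u' τ, v τ⟫) τ :=
          hvd.inner (𝕜 := ℝ) hvd
        have := he.fun_mul hN
        exact this.congr_deriv (by ring)
      have hPd : HasDerivAt (fun σ => ∫ x in s..σ, B x) (B τ) τ := by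
        apply intervalIntegral.integral_hasDerivAt_right (hBint τ ⟨hτ.1.le, hτ.2.le⟩)
        · exact ⟨Ici 0, Ici_mem_nhds hτ0, hBc.aestronglyMeasurable measurableSet_Ici⟩
        · exact hBc.continuousAt (Ici_mem_nhds hτ0)
      exact ((hPd.const_mul ω⁻¹).sub hFd).hasDerivWithinAt
    · -- nonnegativity of the derivative
      rw [interior_Icc]
      intro τ hτ
      have hτ0 : (0:ℝ) ≤ τ := le_trans hs hτ.1.le
      have hτh0 : (0:ℝ) ≤ τ + h := by linarith
      have hode : ∀ r : ℝ, 0 ≤ r → u' r = g r - A (u r) := fun r hr =>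
        eq_sub_of_add_eq (hu r hr).2
      have hw : u' (τ + h) - u' τ = (g (τ + h) - g τ) - (A (u (τ + h)) - A (u τ)) := by
        rw [hode (τ + h) hτh0, hode τ hτ0]; abel
      have hE : (0:ℝ) < Real.exp (ω * τ) := Real.exp_pos _
      have hwv : ⟪u' (τ + h) - u' τ, v τ⟫ ≤
          ‖g (τ + h) - g τ‖ * ‖v τ‖ - ω * ‖v τ‖ ^ 2 := by
        rw [hw, inner_sub_left]
        have h1 : ⟪g (τ + h) - g τ, v τ⟫ ≤ ‖g (τ + h) - g τ‖ * ‖v τ‖ :=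
          real_inner_le_norm _ _
        have h2 : ω * ‖v τ‖ ^ 2 ≤ ⟪A (u (τ + h)) - A (u τ), v τ⟫ := hA _ _
        linarith
      have hvv : ⟪v τ, v τ⟫ = ‖v τ‖ ^ 2 := real_inner_self_eq_norm_sq _
      have hcomm : ⟪v τ, u' (τ + h) - u' τ⟫ = ⟪u' (τ + h) - u' τ, v τ⟫ :=
        real_inner_comm _ _
      have hωinv : ω * ω⁻¹ = 1 := mul_inv_cancel₀ hω.ne'
      have key : ω * ‖v τ‖ ^ 2 + 2 * (‖g (τ + h) - g τ‖ * ‖v τ‖ - ω * ‖v τ‖ ^ 2)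
          ≤ ω⁻¹ * ‖g (τ + h) - g τ‖ ^ 2 := by
        nlinarith [sq_nonneg (ω * ‖v τ‖ - ‖g (τ + h) - g τ‖), hω, sq_nonneg ‖g (τ + h) - g τ‖,
          inv_nonneg.2 hω.le]
      have step : ω * Real.exp (ω * τ) * ⟪v τ, v τ⟫ +
          Real.exp (ω * τ) * (⟪v τ, u' (τ + h) - u' τ⟫ + ⟪u' (τ + h) - u' τ, v τ⟫)
          ≤ ω⁻¹ * B τ := by
        rw [hcomm, hvv, hB_def]
        nlinarith [mul_le_mul_of_nonneg_left hwv hE.le,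
          mul_le_mul_of_nonneg_left key hE.le]
      linarith
  have hψle := hmono (left_mem_Icc.2 hst) (right_mem_Icc.2 hst) hst
  have h1 : F t ≤ F s + ω⁻¹ * ∫ x in s..t, B x := by
    simp only [hψ_def, intervalIntegral.integral_same, mul_zero, zero_sub] at hψle
    linarith
  have hEt : (0:ℝ) < Real.exp (-(ω * t)) := Real.exp_pos _
  have hpt : ∀ τ : ℝ, Real.exp (-(ω * t)) * B τ
      = Real.exp (-ω * (t - τ)) * ‖g (τ + h) - g τ‖ ^ 2 := by
    intro τ
    simp only [hB_def]
    rw [← mul_assoc, ← Real.exp_add]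
    congr 2
    ring
  calc ‖u (t + h) - u t‖ ^ 2 = Real.exp (-(ω * t)) * F t := by
        simp only [hF_def]
        rw [← mul_assoc, ← Real.exp_add, neg_add_cancel, Real.exp_zero, one_mul,
          real_inner_self_eq_norm_sq]
    _ ≤ Real.exp (-(ω * t)) * (F s + ω⁻¹ * ∫ x in s..t, B x) :=
        mul_le_mul_of_nonneg_left h1 hEt.le
    _ = Real.exp (-ω * (t - s)) * ‖u (s + h) - u s‖ ^ 2
        + ω⁻¹ * ∫ τ in s..t, Real.exp (-ω * (t - τ)) * ‖g (τ + h) - g τ‖ ^ 2 := by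
        rw [mul_add]
        congr 1
        · simp only [hF_def]
          rw [← mul_assoc, ← Real.exp_add, real_inner_self_eq_norm_sq]
          congr 2
          ring
        · rw [← mul_assoc, mul_comm (Real.exp (-(ω * t))) ω⁻¹, mul_assoc]
          congr 1
          rw [← intervalIntegral.integral_const_mul]
          exact intervalIntegral.integral_congr fun τ _ => hpt τ

/-- **Derivative decay estimate (esta10):** if `A` is `ω`-strongly monotone, `g` is `C¹`
and `u` solves `u' + A u = g` on `[0,∞)`, then for `0 ≤ s ≤ t`,
`‖u'(t)‖² ≤ e^{-ω(t-s)}‖u'(s)‖² + ω⁻¹ ∫_s^t e^{-ω(t-τ)}‖g'(τ)‖² dτ`. -/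
theorem derivative_decay_strongly_monotone
    {H : Type*} [NormedAddCommGroup H] [InnerProductSpace ℝ H] [CompleteSpace H]
    (ω : ℝ) (hω : 0 < ω) (A : H → H)
    (hA : ∀ x y : H, ω * ‖x - y‖ ^ 2 ≤ @inner ℝ _ _ (A x - A y) (x - y))
    (g g' : ℝ → H)
    (hg : ∀ t : ℝ, 0 ≤ t → HasDerivAt g (g' t) t)
    (hg' : ContinuousOn g' (Ici 0))
    (u u' : ℝ → H)
    (hu : ∀ t : ℝ, 0 ≤ t → HasDerivAt u (u' t) t ∧ u' t + A (u t) = g t) :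
    ∀ s t : ℝ, 0 ≤ s → s ≤ t →
      ‖u' t‖ ^ 2 ≤
        Real.exp (-ω * (t - s)) * ‖u' s‖ ^ 2 +
          ω⁻¹ * ∫ τ in s..t, Real.exp (-ω * (t - τ)) * ‖g' τ‖ ^ 2 := by
  intro s t hs hst
  have ht0 : (0:ℝ) ≤ t := le_trans hs hst
  have hgc : ContinuousOn g (Ici 0) := fun x hx =>
    ((hg x hx).continuousAt).continuousWithinAt
  have hsub : Icc s (t + 1) ⊆ Ici 0 := fun x hx => le_trans hs hx.1
  obtain ⟨C, hC⟩ := (isCompact_Icc (a := s) (b := t + 1)).exists_bound_of_continuousOn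
    (hg'.mono hsub)
  have hC0 : 0 ≤ C := le_trans (norm_nonneg _) (hC s ⟨le_refl s, by linarith⟩)
  set l : Filter ℝ := 𝓝[>] (0:ℝ) with hl_def
  haveI hlne : l.NeBot := by rw [hl_def]; infer_instance
  have hle : l ≤ 𝓝[≠] (0:ℝ) := by
    rw [hl_def]
    exact nhdsWithin_mono 0 (fun x hx => ne_of_gt hx)
  have tendsto_u : ∀ r : ℝ, 0 ≤ r →
      Tendsto (fun h : ℝ => ‖h⁻¹ • (u (r + h) - u r)‖ ^ 2) l (𝓝 (‖u' r‖ ^ 2)) := fun r hr =>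
    (((hu r hr).1.tendsto_slope_zero.mono_left hle).norm.pow 2)
  have hIoc : Set.uIoc s t = Ioc s t := uIoc_of_le hst
  have tendsto_int : Tendsto
      (fun h : ℝ => ∫ τ in s..t, Real.exp (-ω * (t - τ)) * ‖h⁻¹ • (g (τ + h) - g τ)‖ ^ 2) l
      (𝓝 (∫ τ in s..t, Real.exp (-ω * (t - τ)) * ‖g' τ‖ ^ 2)) := by
    apply intervalIntegral.tendsto_integral_filter_of_dominated_convergence
      (bound := fun _ => C ^ 2)
    · filter_upwards [self_mem_nhdsWithin] with h hh
      have hh0 : (0:ℝ) < h := hh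
      have hmaps : MapsTo (fun τ : ℝ => τ + h) (Ioc s t) (Ici 0) := fun x hx => by
        simp only [mem_Ioc, mem_Ici] at *; linarith [hx.1]
      have hcont : ContinuousOn
          (fun τ => Real.exp (-ω * (t - τ)) * ‖h⁻¹ • (g (τ + h) - g τ)‖ ^ 2) (Ioc s t) := by
        apply ContinuousOn.mul
        · exact (Real.continuous_exp.comp (continuous_const.mul
            (continuous_const.sub continuous_id))).continuousOn
        · apply ContinuousOn.pow
          apply ContinuousOn.norm
          apply ContinuousOn.const_smul
          exact ((hgc.comp (continuous_add_right h).continuousOn hmaps).sub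
            (hgc.mono (fun x hx => le_trans hs hx.1.le)))
      rw [hIoc]
      exact hcont.aestronglyMeasurable measurableSet_Ioc
    · filter_upwards [Ioc_mem_nhdsGT_of_mem ⟨le_refl (0:ℝ), zero_lt_one⟩] with h hh
      apply ae_of_all
      intro τ hτ
      rw [hIoc] at hτ
      have hh0 : (0:ℝ) < h := hh.1
      have hmem1 : τ ∈ Icc s (t + 1) := ⟨hτ.1.le, by linarith [hτ.2]⟩
      have hmem2 : τ + h ∈ Icc s (t + 1) := ⟨by linarith [hτ.1.le, hh0.le], by
        linarith [hτ.2, hh.2]⟩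
      have hdq : ‖g (τ + h) - g τ‖ ≤ C * h := by
        have := Convex.norm_image_sub_le_of_norm_hasDerivWithin_le
          (f := g) (f' := g') (s := Icc s (t + 1))
          (fun x hx => (hg x (hsub hx)).hasDerivWithinAt) hC (convex_Icc _ _) hmem1 hmem2
        simpa [Real.norm_eq_abs, abs_of_pos hh0] using this
      have hq : ‖h⁻¹ • (g (τ + h) - g τ)‖ ≤ C := by
        rw [norm_smul, Real.norm_eq_abs, abs_of_pos (inv_pos.2 hh0)]
        calc h⁻¹ * ‖g (τ + h) - g τ‖ ≤ h⁻¹ * (C * h) := by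
              apply mul_le_mul_of_nonneg_left hdq (inv_pos.2 hh0).le
          _ = C := by field_simp
      have hexp : Real.exp (-ω * (t - τ)) ≤ 1 := by
        rw [← Real.exp_zero]
        apply Real.exp_le_exp.2
        nlinarith [hτ.2, hω]
      have hnn : (0:ℝ) ≤ Real.exp (-ω * (t - τ)) * ‖h⁻¹ • (g (τ + h) - g τ)‖ ^ 2 :=
        mul_nonneg (Real.exp_pos _).le (sq_nonneg _)
      rw [Real.norm_eq_abs, abs_of_nonneg hnn]
      calc Real.exp (-ω * (t - τ)) * ‖h⁻¹ • (g (τ + h) - g τ)‖ ^ 2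
          ≤ 1 * C ^ 2 := by
            apply mul_le_mul hexp (pow_le_pow_left₀ (norm_nonneg _) hq 2)
              (sq_nonneg _) zero_le_one
        _ = C ^ 2 := one_mul _
    · exact intervalIntegrable_const
    · apply ae_of_all
      intro τ hτ
      rw [hIoc] at hτ
      have hτ0 : (0:ℝ) ≤ τ := le_trans hs hτ.1.le
      have := ((hg τ hτ0).tendsto_slope_zero.mono_left hle)
      exact tendsto_const_nhds.mul ((this.norm).pow 2)
  have hineq : ∀ᶠ h in l,
      ‖h⁻¹ • (u (t + h) - u t)‖ ^ 2 ≤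
        Real.exp (-ω * (t - s)) * ‖h⁻¹ • (u (s + h) - u s)‖ ^ 2 +
          ω⁻¹ * ∫ τ in s..t, Real.exp (-ω * (t - τ)) * ‖h⁻¹ • (g (τ + h) - g τ)‖ ^ 2 := by
    filter_upwards [self_mem_nhdsWithin] with h hh
    have hh0 : (0:ℝ) < h := hh
    have key := decay_key_aux ω hω A hA g hgc u u' hu h hh0 s t hs hst
    have hsq : (0:ℝ) ≤ (h⁻¹) ^ 2 := sq_nonneg _
    have hmul := mul_le_mul_of_nonneg_left key hsq
    have hnorm : ∀ x : H, ‖h⁻¹ • x‖ ^ 2 = (h⁻¹) ^ 2 * ‖x‖ ^ 2 := fun x => by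
      rw [norm_smul, mul_pow, Real.norm_eq_abs, sq_abs]
    calc ‖h⁻¹ • (u (t + h) - u t)‖ ^ 2 = (h⁻¹) ^ 2 * ‖u (t + h) - u t‖ ^ 2 := hnorm _
      _ ≤ (h⁻¹) ^ 2 * (Real.exp (-ω * (t - s)) * ‖u (s + h) - u s‖ ^ 2
          + ω⁻¹ * ∫ τ in s..t, Real.exp (-ω * (t - τ)) * ‖g (τ + h) - g τ‖ ^ 2) := hmul
      _ = Real.exp (-ω * (t - s)) * ‖h⁻¹ • (u (s + h) - u s)‖ ^ 2 +
          ω⁻¹ * ∫ τ in s..t, Real.exp (-ω * (t - τ)) * ‖h⁻¹ • (g (τ + h) - g τ)‖ ^ 2 := by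
        rw [mul_add]
        congr 1
        · simp only [hnorm]; ring
        · rw [← mul_assoc, mul_comm ((h⁻¹) ^ 2) ω⁻¹, mul_assoc,
            ← intervalIntegral.integral_const_mul]
          congr 1
          apply intervalIntegral.integral_congr
          intro τ _
          simp only [hnorm]
          ring
  exact le_of_tendsto_of_tendsto (tendsto_u t ht0)
    ((tendsto_const_nhds.mul (tendsto_u s hs)).add (tendsto_int.const_mul ω⁻¹)) hineq
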